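/- arXiv:2006.10131 — 3 statements merged into one kernel-verified Lean document; each statement's English description precedes it below -/
import Mathlib

section
/- For the 2D multi-class traffic system U_t + A(U)U_x + B(U)U_y = 0 with A = Df, B = Dg, f(ρ,μ) = cˣ(1-(ρ+μ))·(ρ,μ) and g(ρ,μ) = cʸ(1-(ρ+μ))·(ρ,μ), the matrix C = κ₁A + κ₂B has eigenvalues λ₁ = (κ₁cˣ+κ₂cʸ)(1-(ρ+μ)) and λ₂ = (κ₁cˣ+κ₂cʸ)(1-2(ρ+μ)) for all (κ₁,κ₂) ∈ ℝ². -/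
/-- eigenvalues of C = κ₁A + κ₂B for the 2D multi-class LWR system. -/
theorem eigenvalues_of_C (cx cy ρ μ κ₁ κ₂ : ℝ)
    (A : Matrix (Fin 2) (Fin 2) ℝ)
    (B : Matrix (Fin 2) (Fin 2) ℝ)
    (hA : A = !![cx * (1 - 2*ρ - μ), -cx * ρ; -cx * μ, cx * (1 - ρ - 2*μ)])
    (hB : B = !![cy * (1 - 2*ρ - μ), -cy * ρ; -cy * μ, cy * (1 - ρ - 2*μ)])
    (C : Matrix (Fin 2) (Fin 2) ℝ) (hC : C = κ₁ • A + κ₂ • B) :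
    (Matrix.charpoly C).eval ((κ₁*cx + κ₂*cy) * (1 - (ρ + μ))) = 0 ∧
    (Matrix.charpoly C).eval ((κ₁*cx + κ₂*cy) * (1 - 2*(ρ + μ))) = 0 := by
  subst hA hB hC
  constructor <;>
  · rw [Matrix.charpoly, Matrix.det_fin_two]
    simp [Matrix.charmatrix_apply, Matrix.diagonal]
    ring
end

section
/- The eigenvalues λ₁ = (κ₁cˣ+κ₂cʸ)(1-(ρ+μ)) and λ₂ = (κ₁cˣ+κ₂cʸ)(1-2(ρ+μ)) of C = κ₁A + κ₂B are real for every (κ₁,κ₂), and they coincide if and only if (ρ,μ) = (0,0) or κ₁cˣ + κ₂cʸ = 0. -/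
/-- the eigenvalues are real and coincide iff (ρ,μ)=(0,0) or κ₁cˣ+κ₂cʸ=0. -/
theorem eigenvalues_real_and_coincide_iff (cx cy ρ μ κ₁ κ₂ : ℝ)
    (hcx : cx ≠ 0) (hcy : cy ≠ 0) (hρ : 0 ≤ ρ) (hμ : 0 ≤ μ)
    (l₁ l₂ : ℝ)
    (hl₁ : l₁ = (κ₁*cx + κ₂*cy) * (1 - (ρ + μ)))
    (hl₂ : l₂ = (κ₁*cx + κ₂*cy) * (1 - 2*(ρ + μ))) :
    (l₁ = l₂ ↔ (ρ = 0 ∧ μ = 0) ∨ κ₁*cx + κ₂*cy = 0) := by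
  subst hl₁ hl₂
  constructor
  · intro h
    have h' : (κ₁*cx + κ₂*cy) * (ρ + μ) = 0 := by linarith
    rcases mul_eq_zero.mp h' with hc | hs
    · exact Or.inr hc
    · exact Or.inl ⟨by linarith, by linarith⟩
  · rintro (⟨h1, h2⟩ | hc)
    · simp [h1, h2]
    · simp [hc]
end

section
/- The fraction ρ/(ρ+μ) is transported with the characteristic speed λ₁: if (ρ,μ) is a C¹ solution of the 2D multi-class system with ρ+μ > 0, then the function φ = ρ/(ρ+μ) satisfies the transport equation φ_t + uˣφ_x + uʸφ_y = 0, where uˣ = cˣ(1-(ρ+μ)) and uʸ = cʸ(1-(ρ+μ)). -/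
/-- the fraction φ = ρ/(ρ+μ) is transported with speed (uˣ, uʸ):
φ_t + uˣφ_x + uʸφ_y = 0, where uˣ = cˣ(1-(ρ+μ)), uʸ = cʸ(1-(ρ+μ)). -/
theorem fraction_transport (cx cy : ℝ) (ρ μ : ℝ → ℝ → ℝ → ℝ)
    (hpos : ∀ t x y, 0 < ρ t x y + μ t x y)
    (hρt : ∀ t x y, DifferentiableAt ℝ (fun s => ρ s x y) t)
    (hρx : ∀ t x y, DifferentiableAt ℝ (fun s => ρ t s y) x)
    (hρy : ∀ t x y, DifferentiableAt ℝ (fun s => ρ t x s) y)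
    (hμt : ∀ t x y, DifferentiableAt ℝ (fun s => μ s x y) t)
    (hμx : ∀ t x y, DifferentiableAt ℝ (fun s => μ t s y) x)
    (hμy : ∀ t x y, DifferentiableAt ℝ (fun s => μ t x s) y)
    (heqρ : ∀ t x y,
      deriv (fun s => ρ s x y) t
      + deriv (fun s => ρ t s y * (cx * (1 - (ρ t s y + μ t s y)))) x
      + deriv (fun s => ρ t x s * (cy * (1 - (ρ t x s + μ t x s)))) y = 0)
    (heqμ : ∀ t x y,
      deriv (fun s => μ s x y) t
      + deriv (fun s => μ t s y * (cx * (1 - (ρ t s y + μ t s y)))) x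
      + deriv (fun s => μ t x s * (cy * (1 - (ρ t x s + μ t x s)))) y = 0) :
    ∀ t x y,
      deriv (fun s => ρ s x y / (ρ s x y + μ s x y)) t
      + cx * (1 - (ρ t x y + μ t x y)) * deriv (fun s => ρ t s y / (ρ t s y + μ t s y)) x
      + cy * (1 - (ρ t x y + μ t x y)) * deriv (fun s => ρ t x s / (ρ t x s + μ t x s)) y
      = 0 := by
  intro t x y
  have hs := (hpos t x y).ne'
  -- abbreviations for partial derivatives
  set At := deriv (fun s => ρ s x y) t with hAt
  set Ax := deriv (fun s => ρ t s y) x with hAx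
  set Ay := deriv (fun s => ρ t x s) y with hAy
  set Bt := deriv (fun s => μ s x y) t with hBt
  set Bx := deriv (fun s => μ t s y) x with hBx
  set By := deriv (fun s => μ t x s) y with hBy
  have hρt' : HasDerivAt (fun s => ρ s x y) At t := (hρt t x y).hasDerivAt
  have hρx' : HasDerivAt (fun s => ρ t s y) Ax x := (hρx t x y).hasDerivAt
  have hρy' : HasDerivAt (fun s => ρ t x s) Ay y := (hρy t x y).hasDerivAt
  have hμt' : HasDerivAt (fun s => μ s x y) Bt t := (hμt t x y).hasDerivAt
  have hμx' : HasDerivAt (fun s => μ t s y) Bx x := (hμx t x y).hasDerivAt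
  have hμy' : HasDerivAt (fun s => μ t x s) By y := (hμy t x y).hasDerivAt
  -- velocity derivatives
  have hux : HasDerivAt (fun s => cx * (1 - (ρ t s y + μ t s y))) (cx * (-(Ax + Bx))) x :=
    ((hρx'.add hμx').const_sub 1).const_mul cx
  have huy : HasDerivAt (fun s => cy * (1 - (ρ t x s + μ t x s))) (cy * (-(Ay + By))) y :=
    ((hρy'.add hμy').const_sub 1).const_mul cy
  -- rewrite the PDEs in scalar form
  have h1 : At + (Ax * (cx * (1 - (ρ t x y + μ t x y))) + ρ t x y * (cx * (-(Ax + Bx))))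
      + (Ay * (cy * (1 - (ρ t x y + μ t x y))) + ρ t x y * (cy * (-(Ay + By)))) = 0 := by
    have := heqρ t x y
    rwa [(show HasDerivAt (fun s => ρ t s y * (cx * (1 - (ρ t s y + μ t s y)))) _ x from hρx'.mul hux).deriv,
      (show HasDerivAt (fun s => ρ t x s * (cy * (1 - (ρ t x s + μ t x s)))) _ y from hρy'.mul huy).deriv] at this
  have h2 : Bt + (Bx * (cx * (1 - (ρ t x y + μ t x y))) + μ t x y * (cx * (-(Ax + Bx))))
      + (By * (cy * (1 - (ρ t x y + μ t x y))) + μ t x y * (cy * (-(Ay + By)))) = 0 := by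
    have := heqμ t x y
    rwa [(show HasDerivAt (fun s => μ t s y * (cx * (1 - (ρ t s y + μ t s y)))) _ x from hμx'.mul hux).deriv,
      (show HasDerivAt (fun s => μ t x s * (cy * (1 - (ρ t x s + μ t x s)))) _ y from hμy'.mul huy).deriv] at this
  -- compute the quotient derivatives in the goal
  rw [(show HasDerivAt (fun s => ρ s x y / (ρ s x y + μ s x y)) _ t from hρt'.div (hρt'.add hμt') hs).deriv,
      (show HasDerivAt (fun s => ρ t s y / (ρ t s y + μ t s y)) _ x from hρx'.div (hρx'.add hμx') hs).deriv,
      (show HasDerivAt (fun s => ρ t x s / (ρ t x s + μ t x s)) _ y from hρy'.div (hρy'.add hμy') hs).deriv]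
  field_simp
  linear_combination μ t x y * h1 - ρ t x y * h2
end
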